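/- Let k be a field of characteristic zero, n ∈ ℕ, R = k[x_1,…,x_n], V ⊆ R the span of x_1,…,x_n, and M a k-vector space; tensor products are over k. Let m : R⊗R → R be multiplication and Δ_b : R → R⊗R the unique k-algebra homomorphism with Δ_b(x_i) = x_i⊗1 + 1⊗x_i. Given a k-linear map α : R⊗M → R⊗M, set α₂ = id_R⊗α and α₁ = (τ_{R,R}⊗id_M)∘α₂∘(τ_{R,R}⊗id_M) (endomorphisms of R⊗R⊗M), and define α′ = (m⊗id_R⊗id_M)∘(id_R⊗Δ_b⊗id_M)∘(id_R⊗α)∘(id_R⊗m⊗id_M)∘(τ_{R,R}⊗id_{R⊗M})∘(id_R⊗Δ_b⊗id_M) and α″ = (τ_{R,R}⊗id_M)∘α′∘(τ_{R,R}⊗id_M). Suppose α₁α₂ − α₂α₁ = α′ − α″ (i.e., α is a representation of the curried Weyl Lie algebra, using the characteristic-zero identification of divided powers with symmetric powers). Let π : R → V be the projection onto the homogeneous component of degree one, and set a := (π⊗id_M)∘α : R⊗M → V⊗M. Then a satisfies the curried Witt identity. -/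

import Mathlib

set_option linter.unusedSectionVars false
set_option linter.dupNamespace false


open TensorProduct

set_option maxSynthPendingDepth 3
set_option synthInstance.maxHeartbeats 400000
set_option maxHeartbeats 1000000

namespace CurriedWitt

variable (k : Type) [CommRing k] (n : ℕ)

/-- `R = k[x_1, …, x_n]`. -/
abbrev R := MvPolynomial (Fin n) k

/-- `V ⊆ R`: the free `k`-submodule spanned by the variables `x_1, …, x_n`. -/
noncomputable def V : Submodule k (R k n) :=
  Submodule.span k (Set.range (MvPolynomial.X : Fin n → R k n))

/-- The variable `x_i` as an element of `V`. -/
noncomputable def xV (i : Fin n) : V k n :=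
  ⟨MvPolynomial.X i, Submodule.subset_span ⟨i, rfl⟩⟩

variable (M : Type) [AddCommGroup M] [Module k M]

/-- `Δ_W : R → V ⊗ R`, `f ↦ ∑ᵢ xᵢ ⊗ ∂f/∂xᵢ`. -/
noncomputable def ΔW : R k n →ₗ[k] (V k n) ⊗[k] (R k n) :=
  ∑ i : Fin n, (TensorProduct.mk k (V k n) (R k n) (xV k n i)) ∘ₗ
    (MvPolynomial.pderiv i).toLinearMap

/-- The braiding `τ_{P,Q} ⊗ id_M : P ⊗ (Q ⊗ M) → Q ⊗ (P ⊗ M)`. -/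
noncomputable def swapL (P Q : Type) [AddCommGroup P] [Module k P]
    [AddCommGroup Q] [Module k Q] :
    P ⊗[k] (Q ⊗[k] M) →ₗ[k] Q ⊗[k] (P ⊗[k] M) :=
  (TensorProduct.assoc k Q P M).toLinearMap ∘ₗ
    LinearMap.rTensor M (TensorProduct.comm k P Q).toLinearMap ∘ₗ
    (TensorProduct.assoc k P Q M).symm.toLinearMap

theorem ΔW_apply (f : R k n) :
    ΔW k n f = ∑ i : Fin n, (xV k n i) ⊗ₜ[k] (MvPolynomial.pderiv i f) := by
  simp [ΔW]

@[simp] theorem swapL_tmul (P Q : Type) [AddCommGroup P] [Module k P]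
    [AddCommGroup Q] [Module k Q] (p : P) (q : Q) (m : M) :
    swapL k M P Q (p ⊗ₜ (q ⊗ₜ m)) = q ⊗ₜ (p ⊗ₜ m) := by
  simp [swapL]

section nat
variable {P Q P' Q' : Type} [AddCommGroup P] [Module k P] [AddCommGroup Q] [Module k Q]
  [AddCommGroup P'] [Module k P'] [AddCommGroup Q'] [Module k Q']

theorem swapL_nat_right (g : Q →ₗ[k] Q') :
    swapL k M P Q' ∘ₗ LinearMap.lTensor P (LinearMap.rTensor M g) =
      LinearMap.rTensor (P ⊗[k] M) g ∘ₗ swapL k M P Q := by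
  apply TensorProduct.ext'; intro p w
  induction w using TensorProduct.induction_on with
  | zero => simp
  | tmul q m => simp
  | add w₁ w₂ h1 h2 =>
    simp only [TensorProduct.tmul_add, map_add] at h1 h2 ⊢
    rw [h1, h2]

theorem map_swapL (f : P →ₗ[k] P') (g : Q →ₗ[k] Q') :
    TensorProduct.map g (LinearMap.rTensor M f) ∘ₗ swapL k M P Q =
      swapL k M P' Q' ∘ₗ TensorProduct.map f (LinearMap.rTensor M g) := by
  apply TensorProduct.ext'; intro p w
  induction w using TensorProduct.induction_on with
  | zero => simp
  | tmul q m => simp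
  | add w₁ w₂ h1 h2 =>
    simp only [TensorProduct.tmul_add, map_add] at h1 h2 ⊢
    rw [h1, h2]
end nat


variable {k n M}

/-- `a′ = (id_V ⊗ a) ∘ (id_V ⊗ m ⊗ id_M) ∘ (τ_{R,V} ⊗ id_{R⊗M}) ∘ (id_R ⊗ Δ_W ⊗ id_M)`. -/
noncomputable def aPrime (a : (R k n) ⊗[k] M →ₗ[k] (V k n) ⊗[k] M) :
    (R k n) ⊗[k] ((R k n) ⊗[k] M) →ₗ[k] (V k n) ⊗[k] ((V k n) ⊗[k] M) :=
  LinearMap.lTensor (V k n) a ∘ₗ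
    LinearMap.lTensor (V k n)
      (LinearMap.rTensor M (LinearMap.mul' k (R k n)) ∘ₗ
        (TensorProduct.assoc k (R k n) (R k n) M).symm.toLinearMap) ∘ₗ
    swapL k ((R k n) ⊗[k] M) (R k n) (V k n) ∘ₗ
    LinearMap.lTensor (R k n)
      ((TensorProduct.assoc k (V k n) (R k n) M).toLinearMap ∘ₗ
        LinearMap.rTensor M (ΔW k n))

/-- `a″ = (τ_{V,V} ⊗ id_M) ∘ a′ ∘ (τ_{R,R} ⊗ id_M)`. -/
noncomputable def aDoublePrime (a : (R k n) ⊗[k] M →ₗ[k] (V k n) ⊗[k] M) :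
    (R k n) ⊗[k] ((R k n) ⊗[k] M) →ₗ[k] (V k n) ⊗[k] ((V k n) ⊗[k] M) :=
  swapL k M (V k n) (V k n) ∘ₗ aPrime a ∘ₗ swapL k M (R k n) (R k n)

/-- `a₁^X = (τ_{X,V} ⊗ id_M) ∘ (id_X ⊗ a) ∘ (τ_{R,X} ⊗ id_M) : R ⊗ X ⊗ M → V ⊗ X ⊗ M`. -/
noncomputable def aOne (a : (R k n) ⊗[k] M →ₗ[k] (V k n) ⊗[k] M)
    (X : Type) [AddCommGroup X] [Module k X] :
    (R k n) ⊗[k] (X ⊗[k] M) →ₗ[k] (V k n) ⊗[k] (X ⊗[k] M) :=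
  swapL k M X (V k n) ∘ₗ LinearMap.lTensor X a ∘ₗ swapL k M (R k n) X

/-- The curried Witt identity `[a₁, a₂] = a′ − a″` for a map `a : R ⊗ M → V ⊗ M`,
where `a₂ = id_R ⊗ a` and `[a₁,a₂] = a₁^V ∘ a₂ − (id_V ⊗ a) ∘ a₁^R`. -/
noncomputable def CurriedWittIdentity (a : (R k n) ⊗[k] M →ₗ[k] (V k n) ⊗[k] M) : Prop :=
  let lhs : (R k n) ⊗[k] ((R k n) ⊗[k] M) →ₗ[k] (V k n) ⊗[k] ((V k n) ⊗[k] M) :=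
    aOne a ↥(V k n) ∘ₗ LinearMap.lTensor (R k n) a -
      LinearMap.lTensor ↥(V k n) a ∘ₗ aOne a (R k n)
  lhs = aPrime a - aDoublePrime a

end CurriedWitt

namespace CurriedWitt

variable (k : Type) [Field k] [CharZero k] (n : ℕ)

/-- The binomial coproduct `Δ_b : R → R ⊗ R`, the unique `k`-algebra homomorphism with
`Δ_b(xᵢ) = xᵢ ⊗ 1 + 1 ⊗ xᵢ`. -/
noncomputable def Δb : R k n →ₗ[k] (R k n) ⊗[k] (R k n) :=
  (MvPolynomial.aeval (fun i : Fin n =>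
      (MvPolynomial.X i ⊗ₜ[k] 1 + 1 ⊗ₜ[k] MvPolynomial.X i :
        (R k n) ⊗[k] (R k n)))).toLinearMap

/-- The projection `π : R → V` of a polynomial onto its homogeneous component of degree
one, `f ↦ ∑ᵢ (coefficient of xᵢ in f) · xᵢ`, valued in `V`. -/
noncomputable def degOneProj : R k n →ₗ[k] V k n :=
  ∑ i : Fin n, (MvPolynomial.lcoeff k (Finsupp.single i 1)).smulRight (xV k n i)

open MvPolynomial

theorem degOneProj_apply (f : R k n) :
    degOneProj k n f = ∑ i : Fin n, coeff (Finsupp.single i 1) f • xV k n i := by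
  simp [degOneProj, lcoeff]

@[simp] theorem degOneProj_X (j : Fin n) : degOneProj k n (X j) = xV k n j := by
  rw [degOneProj_apply, Finset.sum_eq_single j]
  · simp
  · intro i _ hij
    rw [coeff_X', if_neg fun h => hij (Finsupp.single_left_injective one_ne_zero h).symm]
    simp
  · simp

@[simp] theorem degOneProj_C (c : k) : degOneProj k n (C c) = 0 := by
  rw [degOneProj_apply]
  apply Finset.sum_eq_zero; intro i _
  rw [coeff_C, if_neg fun h => (fun h0 => one_ne_zero (Finsupp.single_eq_zero.1 h0)) h.symm]
  simp

@[simp] theorem degOneProj_one : degOneProj k n 1 = 0 := by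
  simpa using degOneProj_C k n 1

theorem anti1 : Finset.HasAntidiagonal.antidiagonal (1:ℕ) = {(0,1),(1,0)} := by decide

theorem coeff_single_mul (i : Fin n) (p q : R k n) :
    coeff (Finsupp.single i 1) (p * q) =
      constantCoeff p * coeff (Finsupp.single i 1) q +
      coeff (Finsupp.single i 1) p * constantCoeff q := by
  rw [coeff_mul, Finsupp.antidiagonal_single, anti1]
  simp [constantCoeff_eq]

theorem degOneProj_mul (p q : R k n) :
    degOneProj k n (p * q) =
      constantCoeff p • degOneProj k n q + constantCoeff q • degOneProj k n p := by
  rw [degOneProj_apply, degOneProj_apply, degOneProj_apply, Finset.smul_sum, Finset.smul_sum,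
    ← Finset.sum_add_distrib]
  refine Finset.sum_congr rfl fun i _ => ?_
  rw [coeff_single_mul, add_smul, smul_smul, smul_smul, mul_comm (coeff _ p)]

noncomputable def ΔbA : R k n →ₐ[k] (R k n) ⊗[k] (R k n) :=
  MvPolynomial.aeval (fun i : Fin n =>
      (MvPolynomial.X i ⊗ₜ[k] 1 + 1 ⊗ₜ[k] MvPolynomial.X i))

theorem Δb_eq (f : R k n) : Δb k n f = ΔbA k n f := rfl

noncomputable def εA : R k n →ₐ[k] k := MvPolynomial.aeval 0

theorem εA_eq (f : R k n) : εA k n f = constantCoeff f := by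
  simp [εA, aeval_zero]

noncomputable def cuA : (R k n) ⊗[k] (R k n) →ₐ[k] R k n :=
  (Algebra.TensorProduct.lid k (R k n)).toAlgHom.comp
    (Algebra.TensorProduct.map (εA k n) (AlgHom.id k (R k n)))

theorem cuA_tmul (p q : R k n) : cuA k n (p ⊗ₜ[k] q) = constantCoeff p • q := by
  simp [cuA, εA_eq, Algebra.smul_def]

theorem counit : ∀ f : R k n, cuA k n (Δb k n f) = f := by
  intro f
  rw [Δb_eq]
  have : (cuA k n).comp (ΔbA k n) = AlgHom.id k (R k n) := by
    apply MvPolynomial.algHom_ext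
    intro i
    simp [ΔbA, cuA_tmul]
  simpa using AlgHom.congr_fun this f

theorem cocomm : ∀ f : R k n, TensorProduct.comm k (R k n) (R k n) (Δb k n f) = Δb k n f := by
  intro f
  rw [Δb_eq]
  have : ((Algebra.TensorProduct.comm k (R k n) (R k n)).toAlgHom).comp (ΔbA k n)
      = ΔbA k n := by
    apply MvPolynomial.algHom_ext
    intro i
    simp [ΔbA, add_comm]
  exact AlgHom.congr_fun this f

theorem rTensor_mul_X_left (i : Fin n) (u : (R k n) ⊗[k] (R k n)) :
    LinearMap.rTensor (R k n) (degOneProj k n) (u * (MvPolynomial.X i ⊗ₜ[k] 1)) =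
      xV k n i ⊗ₜ[k] cuA k n u := by
  induction u using TensorProduct.induction_on with
  | zero => simp
  | tmul p q =>
    rw [Algebra.TensorProduct.tmul_mul_tmul, LinearMap.rTensor_tmul, mul_one, degOneProj_mul,
      cuA_tmul]
    simp [constantCoeff_X, TensorProduct.smul_tmul', TensorProduct.tmul_smul]
  | add u v hu hv =>
    rw [add_mul, map_add, hu, hv, map_add, TensorProduct.tmul_add]

theorem rTensor_mul_X_right (i : Fin n) (u : (R k n) ⊗[k] (R k n)) :
    LinearMap.rTensor (R k n) (degOneProj k n) (u * ((1 : R k n) ⊗ₜ[k] MvPolynomial.X i)) =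
      LinearMap.lTensor (V k n) (LinearMap.mulLeft k (MvPolynomial.X i))
        (LinearMap.rTensor (R k n) (degOneProj k n) u) := by
  induction u using TensorProduct.induction_on with
  | zero => simp
  | tmul p q =>
    rw [Algebra.TensorProduct.tmul_mul_tmul, mul_one, LinearMap.rTensor_tmul,
      LinearMap.rTensor_tmul, LinearMap.lTensor_tmul]
    rw [LinearMap.mulLeft_apply, mul_comm]
  | add u v hu hv =>
    rw [add_mul, map_add, hu, hv, map_add, map_add]

theorem rTensor_Δb (f : R k n) :
    LinearMap.rTensor (R k n) (degOneProj k n) (Δb k n f) = ΔW k n f := by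
  induction f using MvPolynomial.induction_on with
  | C c =>
    rw [Δb_eq]
    show LinearMap.rTensor (R k n) (degOneProj k n) (ΔbA k n (C c)) = _
    rw [ΔbA, aeval_C, Algebra.TensorProduct.algebraMap_apply, LinearMap.rTensor_tmul,
      algebraMap_eq, degOneProj_C, TensorProduct.zero_tmul, ΔW_apply]
    simp [pderiv_C]
  | add p q hp hq => simp only [map_add, hp, hq]
  | mul_X p i hp =>
    have hmul : Δb k n (p * X i) = Δb k n p * (X i ⊗ₜ[k] 1 + (1:R k n) ⊗ₜ[k] X i) := by
      rw [Δb_eq, Δb_eq, map_mul]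
      congr 1
      simp [ΔbA]
    rw [hmul, mul_add, map_add, rTensor_mul_X_left, rTensor_mul_X_right, counit, hp,
      ΔW_apply, ΔW_apply]
    rw [map_sum]
    have : ∀ j : Fin n, xV k n j ⊗ₜ[k] pderiv j (p * X i) =
        xV k n j ⊗ₜ[k] (X i * pderiv j p) + xV k n j ⊗ₜ[k] (p * pderiv j (X i)) := by
      intro j
      rw [pderiv_mul, TensorProduct.tmul_add, mul_comm (pderiv j p) (X i)]
    simp only [this, Finset.sum_add_distrib]
    have hA : (∑ j : Fin n, xV k n j ⊗ₜ[k] (p * pderiv j (X i))) = xV k n i ⊗ₜ[k] p := by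
      rw [Finset.sum_eq_single i]
      · simp
      · intro j _ hji
        rw [pderiv_X_of_ne (Ne.symm hji), mul_zero, TensorProduct.tmul_zero]
      · simp
    simp only [LinearMap.lTensor_tmul, LinearMap.mulLeft_apply]
    rw [hA, add_comm]

/-- `Δb` as a map-level identity with the projection. -/
theorem rTensor_Δb_eq :
    LinearMap.rTensor (R k n) (degOneProj k n) ∘ₗ Δb k n = ΔW k n :=
  LinearMap.ext (rTensor_Δb k n)

theorem cu_Δb_eq : (cuA k n).toLinearMap ∘ₗ Δb k n = LinearMap.id :=
  LinearMap.ext (counit k n)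

theorem mapππ_Δb_comm (f : R k n) :
    TensorProduct.comm k (V k n) (V k n)
      (TensorProduct.map (degOneProj k n) (degOneProj k n) (Δb k n f)) =
      TensorProduct.map (degOneProj k n) (degOneProj k n) (Δb k n f) := by
  have h : ∀ u : (R k n) ⊗[k] (R k n),
      TensorProduct.comm k (V k n) (V k n)
        (TensorProduct.map (degOneProj k n) (degOneProj k n) u) =
      TensorProduct.map (degOneProj k n) (degOneProj k n)
        (TensorProduct.comm k (R k n) (R k n) u) := by
    intro u
    induction u using TensorProduct.induction_on with
    | zero => simp
    | tmul p q => simp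
    | add u v hu hv => simp only [map_add, hu, hv]
  rw [h, cocomm]


variable (M : Type) [AddCommGroup M] [Module k M]
variable {k n M}

/-- `α′` for a map `α : R ⊗ M → R ⊗ M`:
`α′ = (m ⊗ id_R ⊗ id_M) ∘ (id_R ⊗ Δ_b ⊗ id_M) ∘ (id_R ⊗ α) ∘ (id_R ⊗ m ⊗ id_M) ∘
(τ_{R,R} ⊗ id_{R ⊗ M}) ∘ (id_R ⊗ Δ_b ⊗ id_M)`. -/
noncomputable def αPrime (α : (R k n) ⊗[k] M →ₗ[k] (R k n) ⊗[k] M) :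
    (R k n) ⊗[k] ((R k n) ⊗[k] M) →ₗ[k] (R k n) ⊗[k] ((R k n) ⊗[k] M) :=
  (LinearMap.rTensor ((R k n) ⊗[k] M) (LinearMap.mul' k (R k n)) ∘ₗ
      (TensorProduct.assoc k (R k n) (R k n) ((R k n) ⊗[k] M)).symm.toLinearMap) ∘ₗ
    LinearMap.lTensor (R k n)
      ((TensorProduct.assoc k (R k n) (R k n) M).toLinearMap ∘ₗ
        LinearMap.rTensor M (Δb k n)) ∘ₗ
    LinearMap.lTensor (R k n) α ∘ₗ
    LinearMap.lTensor (R k n)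
      (LinearMap.rTensor M (LinearMap.mul' k (R k n)) ∘ₗ
        (TensorProduct.assoc k (R k n) (R k n) M).symm.toLinearMap) ∘ₗ
    swapL k ((R k n) ⊗[k] M) (R k n) (R k n) ∘ₗ
    LinearMap.lTensor (R k n)
      ((TensorProduct.assoc k (R k n) (R k n) M).toLinearMap ∘ₗ
        LinearMap.rTensor M (Δb k n))

/-- `α″ = (τ_{R,R} ⊗ id_M) ∘ α′ ∘ (τ_{R,R} ⊗ id_M)`. -/
noncomputable def αDoublePrime (α : (R k n) ⊗[k] M →ₗ[k] (R k n) ⊗[k] M) :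
    (R k n) ⊗[k] ((R k n) ⊗[k] M) →ₗ[k] (R k n) ⊗[k] ((R k n) ⊗[k] M) :=
  swapL k M (R k n) (R k n) ∘ₗ αPrime α ∘ₗ swapL k M (R k n) (R k n)

section AuxM
open MvPolynomial LinearMap
/-! ### Auxiliary maps -/

/-- `Q = π ⊗ π ⊗ id`. -/
noncomputable def QQ : (R k n) ⊗[k] ((R k n) ⊗[k] M) →ₗ[k] (V k n) ⊗[k] ((V k n) ⊗[k] M) :=
  TensorProduct.map (degOneProj k n) (LinearMap.rTensor M (degOneProj k n))

/-- contraction of the first tensor factor with the counit. -/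
noncomputable def ctr : (R k n) ⊗[k] ((R k n) ⊗[k] M) →ₗ[k] (R k n) ⊗[k] M :=
  (TensorProduct.lid k ((R k n) ⊗[k] M)).toLinearMap ∘ₗ
    LinearMap.rTensor ((R k n) ⊗[k] M) (εA k n).toLinearMap

@[simp] theorem ctr_tmul (x : R k n) (w : (R k n) ⊗[k] M) :
    ctr (x ⊗ₜ[k] w) = εA k n x • w := by
  simp [ctr]

/-- multiplication `x ⊗ (z ⊗ m) ↦ xz ⊗ m`. -/
noncomputable def μm : (R k n) ⊗[k] ((R k n) ⊗[k] M) →ₗ[k] (R k n) ⊗[k] M :=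
  LinearMap.rTensor M (LinearMap.mul' k (R k n)) ∘ₗ
    (TensorProduct.assoc k (R k n) (R k n) M).symm.toLinearMap

@[simp] theorem μm_tmul (x z : R k n) (m : M) :
    μm (x ⊗ₜ[k] (z ⊗ₜ[k] m)) = (x * z) ⊗ₜ[k] m := by
  simp [μm]

/-- `z ⊗ m ↦ (π⊗π)(Δb z) ⊗ m`. -/
noncomputable def φm : (R k n) ⊗[k] M →ₗ[k] (V k n) ⊗[k] ((V k n) ⊗[k] M) :=
  (TensorProduct.assoc k (V k n) (V k n) M).toLinearMap ∘ₗ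
    LinearMap.rTensor M
      (TensorProduct.map (degOneProj k n) (degOneProj k n) ∘ₗ Δb k n)

noncomputable def headm : (R k n) ⊗[k] ((R k n) ⊗[k] M) →ₗ[k] (R k n) ⊗[k] ((R k n) ⊗[k] M) :=
  LinearMap.lTensor (R k n)
      (LinearMap.rTensor M (LinearMap.mul' k (R k n)) ∘ₗ
        (TensorProduct.assoc k (R k n) (R k n) M).symm.toLinearMap) ∘ₗ
    swapL k ((R k n) ⊗[k] M) (R k n) (R k n) ∘ₗ
    LinearMap.lTensor (R k n)
      ((TensorProduct.assoc k (R k n) (R k n) M).toLinearMap ∘ₗ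
        LinearMap.rTensor M (Δb k n))

noncomputable def tailm : (R k n) ⊗[k] ((R k n) ⊗[k] M) →ₗ[k] (R k n) ⊗[k] ((R k n) ⊗[k] M) :=
  (LinearMap.rTensor ((R k n) ⊗[k] M) (LinearMap.mul' k (R k n)) ∘ₗ
      (TensorProduct.assoc k (R k n) (R k n) ((R k n) ⊗[k] M)).symm.toLinearMap) ∘ₗ
    LinearMap.lTensor (R k n)
      ((TensorProduct.assoc k (R k n) (R k n) M).toLinearMap ∘ₗ
        LinearMap.rTensor M (Δb k n))

noncomputable def headWm : (R k n) ⊗[k] ((R k n) ⊗[k] M) →ₗ[k] (V k n) ⊗[k] ((R k n) ⊗[k] M) :=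
  LinearMap.lTensor (V k n)
      (LinearMap.rTensor M (LinearMap.mul' k (R k n)) ∘ₗ
        (TensorProduct.assoc k (R k n) (R k n) M).symm.toLinearMap) ∘ₗ
    swapL k ((R k n) ⊗[k] M) (R k n) (V k n) ∘ₗ
    LinearMap.lTensor (R k n)
      ((TensorProduct.assoc k (V k n) (R k n) M).toLinearMap ∘ₗ
        LinearMap.rTensor M (ΔW k n))

theorem αPrime_eq (α : (R k n) ⊗[k] M →ₗ[k] (R k n) ⊗[k] M) :
    αPrime α = tailm ∘ₗ LinearMap.lTensor (R k n) α ∘ₗ headm := rfl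

theorem aPrime_eq (a : (R k n) ⊗[k] M →ₗ[k] (V k n) ⊗[k] M) :
    aPrime a = LinearMap.lTensor (V k n) a ∘ₗ headWm := rfl



/-- NL4: projecting the first factor turns `headm` into `headWm`. -/
theorem rT_head :
    LinearMap.rTensor ((R k n) ⊗[k] M) (degOneProj k n) ∘ₗ headm (M := M) = headWm := by
  apply TensorProduct.ext'; intro x w
  induction w using TensorProduct.induction_on with
  | zero => simp
  | add w₁ w₂ h1 h2 =>
    simp only [TensorProduct.tmul_add, map_add] at h1 h2 ⊢
    rw [h1, h2]
  | tmul z m =>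
    simp only [headm, headWm, LinearMap.comp_apply, LinearMap.lTensor_tmul,
      LinearMap.rTensor_tmul, ← rTensor_Δb]
    generalize Δb k n z = u
    induction u using TensorProduct.induction_on with
    | zero => simp
    | add u v hu hv =>
      simp only [map_add, TensorProduct.add_tmul, TensorProduct.tmul_add] at hu hv ⊢
      rw [hu, hv]
    | tmul p q => simp

/-- NL7: contracting the first factor of `headm` gives multiplication. -/
theorem ctr_head : ctr (k := k) (n := n) (M := M) ∘ₗ headm = μm := by
  apply TensorProduct.ext'; intro x w
  induction w using TensorProduct.induction_on with
  | zero => simp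
  | add w₁ w₂ h1 h2 =>
    simp only [TensorProduct.tmul_add, map_add] at h1 h2 ⊢
    rw [h1, h2]
  | tmul z m =>
    have key : ∀ u : (R k n) ⊗[k] (R k n),
        ctr (LinearMap.lTensor (R k n)
          (LinearMap.rTensor M (LinearMap.mul' k (R k n)) ∘ₗ
            (TensorProduct.assoc k (R k n) (R k n) M).symm.toLinearMap)
          (swapL k ((R k n) ⊗[k] M) (R k n) (R k n)
            (x ⊗ₜ[k] (TensorProduct.assoc k (R k n) (R k n) M (u ⊗ₜ[k] m))))) =
        (x * cuA k n u) ⊗ₜ[k] m := by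
      intro u
      induction u using TensorProduct.induction_on with
      | zero => simp
      | add u v hu hv =>
        simp only [map_add, TensorProduct.add_tmul, TensorProduct.tmul_add, hu, hv]
        rw [← TensorProduct.add_tmul, ← mul_add]
      | tmul p q =>
        simp [cuA_tmul, εA_eq, TensorProduct.smul_tmul', mul_smul_comm]
    have hk := key (Δb k n z)
    rw [counit] at hk
    rw [μm_tmul]
    exact hk


/-- NL5: `Q ∘ tail = φ ∘ ctr + Q`. -/
theorem QQ_tail :
    QQ (k := k) (n := n) (M := M) ∘ₗ tailm = φm ∘ₗ ctr + QQ := by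
  apply TensorProduct.ext'; intro x w
  induction w using TensorProduct.induction_on with
  | zero => simp
  | add w₁ w₂ h1 h2 =>
    simp only [TensorProduct.tmul_add, map_add] at h1 h2 ⊢
    rw [h1, h2]
  | tmul z m =>
    have key : ∀ u : (R k n) ⊗[k] (R k n),
        QQ (LinearMap.rTensor ((R k n) ⊗[k] M) (LinearMap.mul' k (R k n))
          ((TensorProduct.assoc k (R k n) (R k n) ((R k n) ⊗[k] M)).symm
            (x ⊗ₜ[k] (TensorProduct.assoc k (R k n) (R k n) M (u ⊗ₜ[k] m))))) =
        εA k n x • (TensorProduct.assoc k (V k n) (V k n) M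
            (TensorProduct.map (degOneProj k n) (degOneProj k n) u ⊗ₜ[k] m)) +
          degOneProj k n x ⊗ₜ[k] (degOneProj k n (cuA k n u) ⊗ₜ[k] m) := by
      intro u
      induction u using TensorProduct.induction_on with
      | zero => simp
      | add u v hu hv =>
        simp only [map_add, TensorProduct.add_tmul, TensorProduct.tmul_add, hu, hv,
          smul_add]
        abel
      | tmul p q =>
        simp only [TensorProduct.assoc_tmul, TensorProduct.assoc_symm_tmul,
          LinearMap.rTensor_tmul, LinearMap.mul'_apply, QQ, TensorProduct.map_tmul,
          cuA_tmul, εA_eq, map_smul]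
        rw [degOneProj_mul]
        rw [TensorProduct.add_tmul]
        congr 1
        rw [TensorProduct.smul_tmul, TensorProduct.smul_tmul']
    simp only [tailm, LinearMap.comp_apply, LinearMap.lTensor_tmul]
    have hk := key (Δb k n z)
    rw [counit] at hk
    rw [LinearMap.add_apply, LinearMap.comp_apply, ctr_tmul, map_smul]
    simp only [φm, QQ, LinearMap.comp_apply, TensorProduct.map_tmul, LinearMap.rTensor_tmul]
    exact hk


theorem ctr_lTensor (α : (R k n) ⊗[k] M →ₗ[k] (R k n) ⊗[k] M) :
    ctr ∘ₗ LinearMap.lTensor (R k n) α = α ∘ₗ ctr := by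
  apply TensorProduct.ext'; intro x w
  simp only [LinearMap.comp_apply, LinearMap.lTensor_tmul, ctr_tmul, map_smul]

theorem μm_swap : μm (k := k) (n := n) (M := M) ∘ₗ swapL k M (R k n) (R k n) = μm := by
  apply TensorProduct.ext'; intro x w
  induction w using TensorProduct.induction_on with
  | zero => simp
  | add w₁ w₂ h1 h2 =>
    simp only [TensorProduct.tmul_add, map_add] at h1 h2 ⊢
    rw [h1, h2]
  | tmul z m => simp [mul_comm]

theorem swap_φm : swapL k M (V k n) (V k n) ∘ₗ φm = φm := by
  apply TensorProduct.ext'; intro z m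
  have aux : ∀ v : (V k n) ⊗[k] (V k n),
      swapL k M (V k n) (V k n) (TensorProduct.assoc k (V k n) (V k n) M (v ⊗ₜ[k] m)) =
        TensorProduct.assoc k (V k n) (V k n) M
          (TensorProduct.comm k (V k n) (V k n) v ⊗ₜ[k] m) := by
    intro v
    induction v using TensorProduct.induction_on with
    | zero => simp
    | add u v hu hv =>
      simp only [map_add, TensorProduct.add_tmul, hu, hv]
    | tmul p q => simp
  have h1 := aux (TensorProduct.map (degOneProj k n) (degOneProj k n) (Δb k n z))
  rw [mapππ_Δb_comm] at h1
  simp only [LinearMap.comp_apply, φm, LinearMap.rTensor_tmul]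
  exact h1

theorem QQ_lTensor (α : (R k n) ⊗[k] M →ₗ[k] (R k n) ⊗[k] M) :
    QQ ∘ₗ LinearMap.lTensor (R k n) α =
      LinearMap.lTensor (V k n) (LinearMap.rTensor M (degOneProj k n) ∘ₗ α) ∘ₗ
        LinearMap.rTensor ((R k n) ⊗[k] M) (degOneProj k n) := by
  rw [QQ, LinearMap.map_comp_lTensor, LinearMap.lTensor_comp_rTensor]

theorem QQ_swap :
    QQ (k := k) (n := n) (M := M) ∘ₗ swapL k M (R k n) (R k n) =
      swapL k M (V k n) (V k n) ∘ₗ QQ := by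
  rw [QQ]
  exact map_swapL k M (degOneProj k n) (degOneProj k n)

theorem swap_lTensor_rT :
    swapL k M (R k n) (V k n) ∘ₗ
        LinearMap.lTensor (R k n) (LinearMap.rTensor M (degOneProj k n)) =
      LinearMap.rTensor ((R k n) ⊗[k] M) (degOneProj k n) ∘ₗ swapL k M (R k n) (R k n) :=
  swapL_nat_right k M (degOneProj k n)



theorem QQ_αPrime (α : (R k n) ⊗[k] M →ₗ[k] (R k n) ⊗[k] M) :
    QQ ∘ₗ αPrime α =
      aPrime (LinearMap.rTensor M (degOneProj k n) ∘ₗ α) + φm ∘ₗ α ∘ₗ μm := by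
  rw [αPrime_eq]
  calc QQ ∘ₗ tailm ∘ₗ LinearMap.lTensor (R k n) α ∘ₗ headm
      = (QQ ∘ₗ tailm) ∘ₗ LinearMap.lTensor (R k n) α ∘ₗ headm := by
        rw [LinearMap.comp_assoc]
    _ = (φm ∘ₗ ctr + QQ) ∘ₗ LinearMap.lTensor (R k n) α ∘ₗ headm := by rw [QQ_tail]
    _ = φm ∘ₗ ctr ∘ₗ LinearMap.lTensor (R k n) α ∘ₗ headm +
          QQ ∘ₗ LinearMap.lTensor (R k n) α ∘ₗ headm := by
        rw [LinearMap.add_comp, LinearMap.comp_assoc]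
    _ = φm ∘ₗ α ∘ₗ μm + aPrime (LinearMap.rTensor M (degOneProj k n) ∘ₗ α) := by
        congr 1
        · rw [← LinearMap.comp_assoc (headm) (LinearMap.lTensor (R k n) α) ctr,
            ctr_lTensor, LinearMap.comp_assoc, ctr_head]
        · rw [← LinearMap.comp_assoc headm (LinearMap.lTensor (R k n) α) QQ, QQ_lTensor,
            LinearMap.comp_assoc, rT_head, aPrime_eq]
    _ = _ := by rw [add_comm]

theorem QQ_αDoublePrime (α : (R k n) ⊗[k] M →ₗ[k] (R k n) ⊗[k] M) :
    QQ ∘ₗ αDoublePrime α =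
      aDoublePrime (LinearMap.rTensor M (degOneProj k n) ∘ₗ α) + φm ∘ₗ α ∘ₗ μm := by
  rw [αDoublePrime]
  calc QQ ∘ₗ swapL k M (R k n) (R k n) ∘ₗ αPrime α ∘ₗ swapL k M (R k n) (R k n)
      = (QQ ∘ₗ swapL k M (R k n) (R k n)) ∘ₗ αPrime α ∘ₗ swapL k M (R k n) (R k n) := by
        rw [LinearMap.comp_assoc]
    _ = swapL k M (V k n) (V k n) ∘ₗ (QQ ∘ₗ αPrime α) ∘ₗ swapL k M (R k n) (R k n) := by
        rw [QQ_swap, LinearMap.comp_assoc, LinearMap.comp_assoc]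
    _ = swapL k M (V k n) (V k n) ∘ₗ
          ((aPrime (LinearMap.rTensor M (degOneProj k n) ∘ₗ α) + φm ∘ₗ α ∘ₗ μm) ∘ₗ
            swapL k M (R k n) (R k n)) := by
        rw [QQ_αPrime]
    _ = aDoublePrime (LinearMap.rTensor M (degOneProj k n) ∘ₗ α) +
          swapL k M (V k n) (V k n) ∘ₗ (φm ∘ₗ α ∘ₗ μm) ∘ₗ swapL k M (R k n) (R k n) := by
        rw [LinearMap.add_comp, LinearMap.comp_add, aDoublePrime]
    _ = _ := by
        congr 1
        simp only [← LinearMap.comp_assoc]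
        rw [swap_φm, LinearMap.comp_assoc, μm_swap]


theorem hA (α : (R k n) ⊗[k] M →ₗ[k] (R k n) ⊗[k] M) :
    aOne (LinearMap.rTensor M (degOneProj k n) ∘ₗ α) ↥(V k n) ∘ₗ
        LinearMap.lTensor (R k n) (LinearMap.rTensor M (degOneProj k n) ∘ₗ α) =
      QQ ∘ₗ ((swapL k M (R k n) (R k n) ∘ₗ LinearMap.lTensor (R k n) α ∘ₗ
            swapL k M (R k n) (R k n)) ∘ₗ LinearMap.lTensor (R k n) α) := by
  rw [aOne, LinearMap.lTensor_comp (R k n)]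
  simp only [LinearMap.comp_assoc]
  rw [← LinearMap.comp_assoc (LinearMap.lTensor (R k n) α)
      (LinearMap.lTensor (R k n) (LinearMap.rTensor M (degOneProj k n)))
      (swapL k M (R k n) (V k n)),
    swap_lTensor_rT,
    LinearMap.comp_assoc (LinearMap.lTensor (R k n) α) (swapL k M (R k n) (R k n))
      (LinearMap.rTensor ((R k n) ⊗[k] M) (degOneProj k n)),
    ← LinearMap.comp_assoc
      (swapL k M (R k n) (R k n) ∘ₗ LinearMap.lTensor (R k n) α)
      (LinearMap.rTensor ((R k n) ⊗[k] M) (degOneProj k n))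
      (LinearMap.lTensor (V k n) (LinearMap.rTensor M (degOneProj k n) ∘ₗ α)),
    ← QQ_lTensor]
  simp only [← LinearMap.comp_assoc]
  rw [← QQ_swap]

theorem hB (α : (R k n) ⊗[k] M →ₗ[k] (R k n) ⊗[k] M) :
    LinearMap.lTensor ↥(V k n) (LinearMap.rTensor M (degOneProj k n) ∘ₗ α) ∘ₗ
        aOne (LinearMap.rTensor M (degOneProj k n) ∘ₗ α) (R k n) =
      QQ ∘ₗ (LinearMap.lTensor (R k n) α ∘ₗ (swapL k M (R k n) (R k n) ∘ₗ
            LinearMap.lTensor (R k n) α ∘ₗ swapL k M (R k n) (R k n))) := by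
  rw [aOne, LinearMap.lTensor_comp (R k n)]
  simp only [LinearMap.comp_assoc]
  rw [← LinearMap.comp_assoc
      (LinearMap.lTensor (R k n) α ∘ₗ swapL k M (R k n) (R k n))
      (LinearMap.lTensor (R k n) (LinearMap.rTensor M (degOneProj k n)))
      (swapL k M (R k n) (V k n)),
    swap_lTensor_rT,
    LinearMap.comp_assoc
      (LinearMap.lTensor (R k n) α ∘ₗ swapL k M (R k n) (R k n))
      (swapL k M (R k n) (R k n))
      (LinearMap.rTensor ((R k n) ⊗[k] M) (degOneProj k n)),
    ← LinearMap.comp_assoc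
      (swapL k M (R k n) (R k n) ∘ₗ LinearMap.lTensor (R k n) α ∘ₗ swapL k M (R k n) (R k n))
      (LinearMap.rTensor ((R k n) ⊗[k] M) (degOneProj k n))
      (LinearMap.lTensor (V k n) (LinearMap.rTensor M (degOneProj k n) ∘ₗ α)),
    ← QQ_lTensor]
  simp only [LinearMap.comp_assoc]


end AuxM

/-- over a field of characteristic zero, if `α : R ⊗ M → R ⊗ M` is a
representation of the curried Weyl Lie algebra, i.e. `α₁α₂ − α₂α₁ = α′ − α″` (with
`α₂ = id_R ⊗ α`, `α₁ = (τ_{R,R} ⊗ id_M) ∘ α₂ ∘ (τ_{R,R} ⊗ id_M)`), then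
`a = (π ⊗ id_M) ∘ α : R ⊗ M → V ⊗ M`, with `π : R → V` the projection onto the
homogeneous component of degree one, satisfies the curried Witt identity. -/
theorem statement8 (α : (R k n) ⊗[k] M →ₗ[k] (R k n) ⊗[k] M)
    (hα :
      (swapL k M (R k n) (R k n) ∘ₗ LinearMap.lTensor (R k n) α ∘ₗ
            swapL k M (R k n) (R k n)) ∘ₗ
          LinearMap.lTensor (R k n) α -
        LinearMap.lTensor (R k n) α ∘ₗ
          (swapL k M (R k n) (R k n) ∘ₗ LinearMap.lTensor (R k n) α ∘ₗ
            swapL k M (R k n) (R k n)) =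
      αPrime α - αDoublePrime α) :
    CurriedWittIdentity (LinearMap.rTensor M (degOneProj k n) ∘ₗ α) := by
  show aOne (LinearMap.rTensor M (degOneProj k n) ∘ₗ α) ↥(V k n) ∘ₗ
      LinearMap.lTensor (R k n) (LinearMap.rTensor M (degOneProj k n) ∘ₗ α) -
      LinearMap.lTensor ↥(V k n) (LinearMap.rTensor M (degOneProj k n) ∘ₗ α) ∘ₗ
        aOne (LinearMap.rTensor M (degOneProj k n) ∘ₗ α) (R k n) =
    aPrime (LinearMap.rTensor M (degOneProj k n) ∘ₗ α) -
      aDoublePrime (LinearMap.rTensor M (degOneProj k n) ∘ₗ α)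
  rw [hA, hB, ← LinearMap.comp_sub, hα, LinearMap.comp_sub, QQ_αPrime, QQ_αDoublePrime]
  abel

end CurriedWitt
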